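/- arXiv:1604.05930 — 2 statements merged into one kernel-verified Lean document; each statement's English description precedes it below -/
import Mathlib

section
/- Let A : [0,ρ] → ℝ be absolutely continuous on [0,R] with A(0) = 0 and finite energy, and suppose N(A) = 2π∫_0^R r A^2 dr = N_0. Then ∫_0^R r A^4 dr ≤ (N_0/π)(∫_0^R r A_r^2 dr)^{1/2}(∫_0^R A^2/r dr)^{1/2}, and consequently for every ε > 0, ∫_0^R r A^4 dr ≤ ε∫_0^R r A_r^2 dr + (N_0^2/(4επ^2))∫_0^R A^2/r dr. -/
open MeasureTheory Set

lemma sq_integral_eq (G : ℝ → ℝ) (hG : Integrable G (volume : Measure ℝ)) :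
    (∫ t, G t) ^ 2 = 2 * ∫ s, G s * ∫ t in Iio s, G t := by
  have hK : Integrable (fun p : ℝ × ℝ => G p.1 * G p.2)
      ((volume : Measure ℝ).prod volume) := hG.mul_prod hG
  have hS : MeasurableSet {p : ℝ × ℝ | p.2 ≤ p.1} :=
    measurableSet_le measurable_snd measurable_fst
  have h1 : Integrable ({p : ℝ × ℝ | p.2 ≤ p.1}.indicator
      (fun p : ℝ × ℝ => G p.1 * G p.2)) ((volume : Measure ℝ).prod volume) :=
    hK.indicator hS
  have h2 : Integrable ({p : ℝ × ℝ | p.2 ≤ p.1}ᶜ.indicator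
      (fun p : ℝ × ℝ => G p.1 * G p.2)) ((volume : Measure ℝ).prod volume) :=
    hK.indicator hS.compl
  have hsplit : (∫ t, G t) ^ 2 =
      (∫ p, {p : ℝ × ℝ | p.2 ≤ p.1}.indicator (fun p : ℝ × ℝ => G p.1 * G p.2) p
        ∂((volume : Measure ℝ).prod volume))
      + ∫ p, {p : ℝ × ℝ | p.2 ≤ p.1}ᶜ.indicator (fun p : ℝ × ℝ => G p.1 * G p.2) p
        ∂((volume : Measure ℝ).prod volume) := by
    rw [← integral_add h1 h2]
    have : (fun p : ℝ × ℝ => ({p : ℝ × ℝ | p.2 ≤ p.1}.indicator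
        (fun p : ℝ × ℝ => G p.1 * G p.2) p +
        {p : ℝ × ℝ | p.2 ≤ p.1}ᶜ.indicator (fun p : ℝ × ℝ => G p.1 * G p.2) p))
        = fun p : ℝ × ℝ => G p.1 * G p.2 := by
      funext p
      simp [Set.indicator_apply]
      by_cases h : p.2 ≤ p.1 <;> simp [h]
    rw [this, integral_prod_mul, sq]
  have e1 : (∫ p, {p : ℝ × ℝ | p.2 ≤ p.1}.indicator (fun p : ℝ × ℝ => G p.1 * G p.2) p
        ∂((volume : Measure ℝ).prod volume))
      = ∫ s, G s * ∫ t in Iio s, G t := by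
    have huncurry : Function.uncurry (fun s t : ℝ => if t ≤ s then G s * G t else 0)
        = {p : ℝ × ℝ | p.2 ≤ p.1}.indicator (fun p : ℝ × ℝ => G p.1 * G p.2) := by
      funext p
      simp [Function.uncurry, Set.indicator_apply]
    have h1' : Integrable (Function.uncurry (fun s t : ℝ => if t ≤ s then G s * G t else 0))
        ((volume : Measure ℝ).prod volume) := by rw [huncurry]; exact h1
    have hpt : (fun p : ℝ × ℝ => {p : ℝ × ℝ | p.2 ≤ p.1}.indicator
        (fun p : ℝ × ℝ => G p.1 * G p.2) p)
        = fun p : ℝ × ℝ => if p.2 ≤ p.1 then G p.1 * G p.2 else 0 := by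
      funext p; simp [Set.indicator_apply]
    rw [hpt]
    rw [show (∫ p : ℝ × ℝ, (if p.2 ≤ p.1 then G p.1 * G p.2 else 0)
        ∂((volume : Measure ℝ).prod volume))
        = ∫ (s : ℝ), ∫ (t : ℝ), (if t ≤ s then G s * G t else 0) from
      (integral_integral h1').symm]
    congr 1
    funext s
    have : (fun t => if t ≤ s then G s * G t else 0)
        = (Iic s).indicator (fun t => G s * G t) := by
      funext t; simp [Set.indicator_apply]
    rw [this, integral_indicator measurableSet_Iic, integral_Iic_eq_integral_Iio,
      integral_const_mul]
  have e2 : (∫ p, {p : ℝ × ℝ | p.2 ≤ p.1}ᶜ.indicator (fun p : ℝ × ℝ => G p.1 * G p.2) p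
        ∂((volume : Measure ℝ).prod volume))
      = ∫ s, G s * ∫ t in Iio s, G t := by
    have huncurry : Function.uncurry (fun s t : ℝ => if s < t then G s * G t else 0)
        = {p : ℝ × ℝ | p.2 ≤ p.1}ᶜ.indicator (fun p : ℝ × ℝ => G p.1 * G p.2) := by
      funext p
      simp [Function.uncurry, Set.indicator_apply, not_le]
    have h2' : Integrable (Function.uncurry (fun s t : ℝ => if s < t then G s * G t else 0))
        ((volume : Measure ℝ).prod volume) := by rw [huncurry]; exact h2
    have hpt : (fun p : ℝ × ℝ => {p : ℝ × ℝ | p.2 ≤ p.1}ᶜ.indicator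
        (fun p : ℝ × ℝ => G p.1 * G p.2) p)
        = fun p : ℝ × ℝ => if p.1 < p.2 then G p.1 * G p.2 else 0 := by
      funext p; simp [Set.indicator_apply, not_le]
    rw [hpt]
    rw [show (∫ p : ℝ × ℝ, (if p.1 < p.2 then G p.1 * G p.2 else 0)
        ∂((volume : Measure ℝ).prod volume))
        = ∫ (s : ℝ), ∫ (t : ℝ), (if s < t then G s * G t else 0) from
      (integral_integral h2').symm]
    rw [integral_integral_swap h2']
    congr 1
    funext t
    have : (fun s => if s < t then G s * G t else 0)
        = (Iio t).indicator (fun s => G s * G t) := by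
      funext s; simp [Set.indicator_apply]
    rw [this, integral_indicator measurableSet_Iio]
    rw [show ∫ s in Iio t, G s * G t = (∫ s in Iio t, G s) * G t from integral_mul_const ..]
    ring_nf
  rw [hsplit, e1, e2]; ring

lemma pointwise_bound (R : ℝ) (A : ℝ → ℝ) (hR : 0 < R)
    (hAC : ∀ ρ ∈ Icc (0 : ℝ) R, A ρ = ∫ t in (0 : ℝ)..ρ, deriv A t)
    (hE1 : IntegrableOn (fun r => r * (deriv A r) ^ 2) (Ioo 0 R))
    (hE2 : IntegrableOn (fun r => (A r) ^ 2 / r) (Ioo 0 R))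
    {ρ : ℝ} (hρ : ρ ∈ Ioo 0 R) :
    (A ρ) ^ 2 ≤ 2 * Real.sqrt (∫ r in Ioo (0 : ℝ) R, r * (deriv A r) ^ 2)
      * Real.sqrt (∫ r in Ioo (0 : ℝ) R, (A r) ^ 2 / r) := by
  have hρR : ρ ∈ Icc (0 : ℝ) R := ⟨hρ.1.le, hρ.2.le⟩
  have hE1nn : 0 ≤ ∫ r in Ioo (0 : ℝ) R, r * (deriv A r) ^ 2 :=
    setIntegral_nonneg measurableSet_Ioo fun r hr => mul_nonneg hr.1.le (sq_nonneg _)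
  have hE2nn : 0 ≤ ∫ r in Ioo (0 : ℝ) R, (A r) ^ 2 / r :=
    setIntegral_nonneg measurableSet_Ioo fun r hr => div_nonneg (sq_nonneg _) hr.1.le
  by_cases hint : IntervalIntegrable (deriv A) volume 0 ρ
  · set g := deriv A with hg
    set G := (Ioo (0 : ℝ) ρ).indicator g with hGdef
    have hsub : Ioo (0 : ℝ) ρ ⊆ Ioo (0 : ℝ) R := Ioo_subset_Ioo le_rfl hρ.2.le
    have hGon : IntegrableOn g (Ioo (0 : ℝ) ρ) := by
      rw [← integrableOn_Ioc_iff_integrableOn_Ioo]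
      exact hint.1
    have hGint : Integrable G := hGon.integrable_indicator measurableSet_Ioo
    have hAρ : A ρ = ∫ t, G t := by
      rw [hAC ρ hρR, intervalIntegral.integral_of_le hρ.1.le,
        integral_Ioc_eq_integral_Ioo, hGdef, integral_indicator measurableSet_Ioo]
    have hH : ∀ s ∈ Ioo (0 : ℝ) ρ, (∫ t in Iio s, G t) = A s := by
      intro s hs
      have hinter : Iio s ∩ Ioo (0 : ℝ) ρ = Ioo (0 : ℝ) s := by
        ext x
        simp only [mem_inter_iff, mem_Iio, mem_Ioo]
        constructor
        · rintro ⟨h1, h2, h3⟩; exact ⟨h2, h1⟩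
        · rintro ⟨h1, h2⟩; exact ⟨h2, h1, h2.trans hs.2⟩
      rw [hGdef, setIntegral_indicator measurableSet_Ioo, hinter,
        ← integral_Ioc_eq_integral_Ioo, ← intervalIntegral.integral_of_le hs.1.le,
        ← hAC s ⟨hs.1.le, (hs.2.trans hρ.2).le⟩]
    have identity : (A ρ) ^ 2 = 2 * ∫ s in Ioo (0 : ℝ) ρ, g s * A s := by
      rw [hAρ, sq_integral_eq G hGint]
      congr 1
      rw [← integral_indicator measurableSet_Ioo]
      congr 1
      funext s
      by_cases hs : s ∈ Ioo (0 : ℝ) ρ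
      · rw [Set.indicator_of_mem hs, hGdef, Set.indicator_of_mem hs, hH s hs]
      · rw [Set.indicator_of_notMem hs, hGdef, Set.indicator_of_notMem hs, zero_mul]
    -- Cauchy-Schwarz part
    set f1 : ℝ → ℝ := fun s => Real.sqrt s * |g s| with hf1
    set f2 : ℝ → ℝ := fun s => |A s| / Real.sqrt s with hf2
    have haeIoo : ∀ᵐ s ∂(volume : Measure ℝ).restrict (Ioo (0 : ℝ) ρ), s ∈ Ioo (0 : ℝ) ρ :=
      ae_restrict_mem measurableSet_Ioo
    have hsq1 : (fun s => f1 s ^ 2) =ᵐ[(volume : Measure ℝ).restrict (Ioo (0 : ℝ) ρ)] fun s => s * g s ^ 2 := by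
      filter_upwards [haeIoo] with s hs
      rw [hf1, mul_pow, sq_abs, Real.sq_sqrt hs.1.le]
    have hsq2 : (fun s => f2 s ^ 2) =ᵐ[(volume : Measure ℝ).restrict (Ioo (0 : ℝ) ρ)] fun s => (A s) ^ 2 / s := by
      filter_upwards [haeIoo] with s hs
      rw [hf2, div_pow, sq_abs, Real.sq_sqrt hs.1.le]
    have hI1 : Integrable (fun s => s * g s ^ 2)  ((volume : Measure ℝ).restrict (Ioo (0 : ℝ) ρ)) := hE1.mono_set hsub
    have hI2 : Integrable (fun s => (A s) ^ 2 / s)  ((volume : Measure ℝ).restrict (Ioo (0 : ℝ) ρ)) := hE2.mono_set hsub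
    have hm1 : AEStronglyMeasurable f1  ((volume : Measure ℝ).restrict (Ioo (0 : ℝ) ρ)) :=
      (Real.continuous_sqrt.aestronglyMeasurable).mul
        ((measurable_deriv A).abs.aestronglyMeasurable)
    have hm2 : AEStronglyMeasurable f2  ((volume : Measure ℝ).restrict (Ioo (0 : ℝ) ρ)) := by
      have base : AEStronglyMeasurable (fun s => (A s) ^ 2 / s)  ((volume : Measure ℝ).restrict (Ioo (0 : ℝ) ρ)) := hI2.1
      have : AEStronglyMeasurable (fun s => Real.sqrt ((A s) ^ 2 / s))  ((volume : Measure ℝ).restrict (Ioo (0 : ℝ) ρ)) :=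
        Real.continuous_sqrt.comp_aestronglyMeasurable base
      refine this.congr ?_
      filter_upwards [haeIoo] with s hs
      simp only [hf2]
      rw [Real.sqrt_div (sq_nonneg _), Real.sqrt_sq_eq_abs]
    have hmem1 : MemLp f1 2  ((volume : Measure ℝ).restrict (Ioo (0 : ℝ) ρ)) :=
      (memLp_two_iff_integrable_sq hm1).mpr (hI1.congr hsq1.symm)
    have hmem2 : MemLp f2 2  ((volume : Measure ℝ).restrict (Ioo (0 : ℝ) ρ)) :=
      (memLp_two_iff_integrable_sq hm2).mpr (hI2.congr hsq2.symm)
    have hconj : (2 : ℝ).HolderConjugate 2 := Real.HolderConjugate.two_two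
    have hHolder := integral_mul_le_Lp_mul_Lq_of_nonneg (μ := (volume : Measure ℝ).restrict (Ioo (0 : ℝ) ρ)) hconj
      (Filter.Eventually.of_forall fun s => mul_nonneg (Real.sqrt_nonneg _) (abs_nonneg _))
      (Filter.Eventually.of_forall fun s => div_nonneg (abs_nonneg _) (Real.sqrt_nonneg _))
      (by simpa using hmem1) (by simpa using hmem2)
    -- rewrite Hölder
    have hrw1 : (∫ s in Ioo (0 : ℝ) ρ, f1 s ^ (2 : ℝ)) = ∫ s in Ioo (0 : ℝ) ρ, s * g s ^ 2 := by
      refine integral_congr_ae ?_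
      filter_upwards [hsq1] with s hs
      rw [Real.rpow_two, hs]
    have hrw2 : (∫ s in Ioo (0 : ℝ) ρ, f2 s ^ (2 : ℝ)) = ∫ s in Ioo (0 : ℝ) ρ, (A s) ^ 2 / s := by
      refine integral_congr_ae ?_
      filter_upwards [hsq2] with s hs
      rw [Real.rpow_two, hs]
    rw [hrw1, hrw2] at hHolder
    have habs : (∫ s in Ioo (0 : ℝ) ρ, g s * A s) ≤ ∫ s in Ioo (0 : ℝ) ρ, f1 s * f2 s  := by
      have h1 : (∫ s in Ioo (0 : ℝ) ρ, g s * A s) ≤ ∫ s in Ioo (0 : ℝ) ρ, |g s * A s| :=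
        le_trans (le_abs_self _) (by
          simpa only [Real.norm_eq_abs] using
            norm_integral_le_integral_norm (μ := (volume : Measure ℝ).restrict (Ioo (0 : ℝ) ρ))
              (f := fun s => g s * A s))
      refine h1.trans (le_of_eq ?_)
      refine integral_congr_ae ?_
      filter_upwards [haeIoo] with s hs
      have hsq : Real.sqrt s ≠ 0 := ne_of_gt (Real.sqrt_pos.mpr hs.1)
      rw [hf1, hf2, abs_mul]
      field_simp
    -- monotone in the domain
    have hmono1 : (∫ s in Ioo (0 : ℝ) ρ, s * g s ^ 2)
        ≤ ∫ r in Ioo (0 : ℝ) R, r * (deriv A r) ^ 2 := by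
      refine setIntegral_mono_set hE1 ?_ (HasSubset.Subset.eventuallyLE hsub)
      filter_upwards [ae_restrict_mem (measurableSet_Ioo (a := (0:ℝ)) (b := R))] with
        s hs using mul_nonneg hs.1.le (sq_nonneg _)
    have hmono2 : (∫ s in Ioo (0 : ℝ) ρ, (A s) ^ 2 / s)
        ≤ ∫ r in Ioo (0 : ℝ) R, (A r) ^ 2 / r := by
      refine setIntegral_mono_set hE2 ?_ (HasSubset.Subset.eventuallyLE hsub)
      filter_upwards [ae_restrict_mem (measurableSet_Ioo (a := (0:ℝ)) (b := R))] with
        s hs using div_nonneg (sq_nonneg _) hs.1.le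
    have hnn1' : (0:ℝ) ≤ ∫ s in Ioo (0 : ℝ) ρ, s * g s ^ 2 :=
      setIntegral_nonneg measurableSet_Ioo fun r hr => mul_nonneg hr.1.le (sq_nonneg _)
    have hnn2' : (0:ℝ) ≤ ∫ s in Ioo (0 : ℝ) ρ, (A s) ^ 2 / s :=
      setIntegral_nonneg measurableSet_Ioo fun r hr => div_nonneg (sq_nonneg _) hr.1.le
    calc (A ρ) ^ 2 = 2 * ∫ s in Ioo (0 : ℝ) ρ, g s * A s := identity
      _ ≤ 2 * ∫ s in Ioo (0 : ℝ) ρ, f1 s * f2 s  := by linarith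
      _ ≤ 2 * ((∫ s in Ioo (0 : ℝ) ρ, s * g s ^ 2) ^ (1/(2:ℝ))
          * (∫ s in Ioo (0 : ℝ) ρ, (A s) ^ 2 / s) ^ (1/(2:ℝ))) := by linarith
      _ = 2 * (Real.sqrt (∫ s in Ioo (0 : ℝ) ρ, s * g s ^ 2)
          * Real.sqrt (∫ s in Ioo (0 : ℝ) ρ, (A s) ^ 2 / s)) := by
          rw [← Real.sqrt_eq_rpow, ← Real.sqrt_eq_rpow]
      _ ≤ 2 * Real.sqrt (∫ r in Ioo (0 : ℝ) R, r * (deriv A r) ^ 2)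
          * Real.sqrt (∫ r in Ioo (0 : ℝ) R, (A r) ^ 2 / r) := by
          rw [mul_assoc]
          refine mul_le_mul_of_nonneg_left ?_ (by norm_num)
          exact mul_le_mul (Real.sqrt_le_sqrt hmono1) (Real.sqrt_le_sqrt hmono2)
            (Real.sqrt_nonneg _) (Real.sqrt_nonneg _)
  · have hz : A ρ = 0 := by
      rw [hAC ρ hρR, intervalIntegral.integral_undef hint]
    rw [hz]
    simp only [ne_eq, OfNat.ofNat_ne_zero, not_false_eq_true, zero_pow]
    positivity


theorem quartic_integral_bound (R N0 : ℝ) (A : ℝ → ℝ)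
    (hR : 0 < R)
    (hAC : ∀ ρ ∈ Icc (0 : ℝ) R, A ρ = ∫ t in (0 : ℝ)..ρ, deriv A t)
    (hE1 : IntegrableOn (fun r => r * (deriv A r) ^ 2) (Ioo 0 R))
    (hE2 : IntegrableOn (fun r => (A r) ^ 2 / r) (Ioo 0 R))
    (hE4 : IntegrableOn (fun r => r * (A r) ^ 4) (Ioo 0 R))
    (hN : 2 * Real.pi * (∫ r in Ioo (0 : ℝ) R, r * (A r) ^ 2) = N0) :
    (∫ r in Ioo (0 : ℝ) R, r * (A r) ^ 4)
      ≤ (N0 / Real.pi) * Real.sqrt (∫ r in Ioo (0 : ℝ) R, r * (deriv A r) ^ 2) *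
          Real.sqrt (∫ r in Ioo (0 : ℝ) R, (A r) ^ 2 / r) ∧
    ∀ ε : ℝ, 0 < ε →
      (∫ r in Ioo (0 : ℝ) R, r * (A r) ^ 4)
        ≤ ε * (∫ r in Ioo (0 : ℝ) R, r * (deriv A r) ^ 2)
          + (N0 ^ 2 / (4 * ε * Real.pi ^ 2)) * ∫ r in Ioo (0 : ℝ) R, (A r) ^ 2 / r := by
  have hπ : (0:ℝ) < Real.pi := Real.pi_pos
  set E1 := ∫ r in Ioo (0 : ℝ) R, r * (deriv A r) ^ 2 with hE1def
  set E2 := ∫ r in Ioo (0 : ℝ) R, (A r) ^ 2 / r with hE2def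
  have hE1nn : 0 ≤ E1 :=
    setIntegral_nonneg measurableSet_Ioo fun r hr => mul_nonneg hr.1.le (sq_nonneg _)
  have hE2nn : 0 ≤ E2 :=
    setIntegral_nonneg measurableSet_Ioo fun r hr => div_nonneg (sq_nonneg _) hr.1.le
  have hI2nn : 0 ≤ ∫ r in Ioo (0 : ℝ) R, r * (A r) ^ 2 :=
    setIntegral_nonneg measurableSet_Ioo fun r hr => mul_nonneg hr.1.le (sq_nonneg _)
  have hN0nn : 0 ≤ N0 := by
    rw [← hN]; positivity
  -- integrability of r * A^2
  have haeIoo : ∀ᵐ r ∂(volume : Measure ℝ).restrict (Ioo (0 : ℝ) R), r ∈ Ioo (0 : ℝ) R :=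
    ae_restrict_mem measurableSet_Ioo
  have hI2int : IntegrableOn (fun r => r * (A r) ^ 2) (Ioo (0 : ℝ) R) := by
    have hmeas : AEStronglyMeasurable (fun r => r * (A r) ^ 2)
        ((volume : Measure ℝ).restrict (Ioo (0 : ℝ) R)) := by
      have base : AEStronglyMeasurable
          (fun r => Real.sqrt (r * (r * (A r) ^ 4)))
          ((volume : Measure ℝ).restrict (Ioo (0 : ℝ) R)) :=
        Real.continuous_sqrt.comp_aestronglyMeasurable
          (aestronglyMeasurable_id.mul hE4.1)
      refine base.congr ?_
      filter_upwards [haeIoo] with r hr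
      have : r * (r * (A r) ^ 4) = (r * (A r) ^ 2) ^ 2 := by ring
      rw [this, Real.sqrt_sq (mul_nonneg hr.1.le (sq_nonneg _))]
    have hid : IntegrableOn (fun r : ℝ => r) (Ioo (0 : ℝ) R) := by
      have := (intervalIntegral.intervalIntegrable_id (μ := (volume : Measure ℝ))
        (a := (0:ℝ)) (b := R)).1
      exact this.mono_set Ioo_subset_Ioc_self
    refine Integrable.mono' ((hE4.add hid).const_mul (1/2 : ℝ)) hmeas ?_
    filter_upwards [haeIoo] with r hr
    rw [Real.norm_eq_abs, abs_of_nonneg (mul_nonneg hr.1.le (sq_nonneg _))]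
    have h0 : 0 ≤ r * ((A r) ^ 2 - 1) ^ 2 := mul_nonneg hr.1.le (sq_nonneg _)
    simp only [Pi.add_apply]
    nlinarith [h0]
  -- first inequality
  have hpt : ∀ ρ ∈ Ioo (0:ℝ) R, (A ρ) ^ 2 ≤ 2 * Real.sqrt E1 * Real.sqrt E2 :=
    fun ρ hρ => pointwise_bound R A hR hAC hE1 hE2 hρ
  have hCnn : 0 ≤ 2 * Real.sqrt E1 * Real.sqrt E2 := by positivity
  have hmain : (∫ r in Ioo (0 : ℝ) R, r * (A r) ^ 4)
      ≤ (2 * Real.sqrt E1 * Real.sqrt E2) * ∫ r in Ioo (0 : ℝ) R, r * (A r) ^ 2 := by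
    rw [← integral_const_mul]
    refine setIntegral_mono_on hE4 (hI2int.const_mul _) measurableSet_Ioo ?_
    intro r hr
    have h1 : r * (A r) ^ 4 = (A r) ^ 2 * (r * (A r) ^ 2) := by ring
    rw [h1]
    exact mul_le_mul_of_nonneg_right (hpt r hr) (mul_nonneg hr.1.le (sq_nonneg _))
  have hI2val : (∫ r in Ioo (0 : ℝ) R, r * (A r) ^ 2) = N0 / (2 * Real.pi) := by
    field_simp at hN ⊢
    linarith [hN]
  have goal1 : (∫ r in Ioo (0 : ℝ) R, r * (A r) ^ 4)
      ≤ (N0 / Real.pi) * Real.sqrt E1 * Real.sqrt E2 := by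
    refine hmain.trans (le_of_eq ?_)
    rw [hI2val]
    field_simp
  refine ⟨goal1, fun ε hε => ?_⟩
  have key : (N0 / Real.pi) * Real.sqrt E1 * Real.sqrt E2
      ≤ ε * E1 + (N0 ^ 2 / (4 * ε * Real.pi ^ 2)) * E2 := by
    set a := Real.sqrt E1 with ha
    set b := Real.sqrt E2 with hb
    have ha2 : a ^ 2 = E1 := Real.sq_sqrt hE1nn
    have hb2 : b ^ 2 = E2 := Real.sq_sqrt hE2nn
    set k := N0 / Real.pi with hk
    have hkn : N0 ^ 2 / (4 * ε * Real.pi ^ 2) = k ^ 2 / (4 * ε) := by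
      rw [hk, div_pow, div_div]
      ring_nf
    rw [← ha2, ← hb2, hkn, ← sub_nonneg]
    have hexp : ε * a ^ 2 + k ^ 2 / (4 * ε) * b ^ 2 - k * a * b
        = (2 * ε * a - k * b) ^ 2 / (4 * ε) := by
      field_simp
      ring
    rw [hexp]
    positivity
  exact goal1.trans key
end

section
/- Let a, b > 0, R = 2a, m ∈ ℤ, and let A_0 be the tent function A_0(r) = (b/a)r on [0,a], A_0(r) = (b/a)(2a-r) on [a,2a]. Then the constrained functional J(A_0) = (1/2)∫_0^R [r A_{0,r}^2 + (m^2/r)A_0^2 - r ln(1+A_0^2) + r A_0^2/(1+A_0^2)] dr equals (R^2/4)(3 - (3/b)arctan(b) - ln(1+b^2) + (4b^2/R^2)(1 + m^2(2 ln 2 - 1))). -/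
open MeasureTheory Set

noncomputable def tentG1 (a b m : ℝ) (r : ℝ) : ℝ :=
  r*(b/a)^2 + m^2*(b/a)^2*r - r*Real.log (1+((b/a)*r)^2) + (r - r/(1+((b/a)*r)^2))

noncomputable def tentG2 (a b m : ℝ) (r : ℝ) : ℝ :=
  r*(b/a)^2 + m^2*(b/a)^2*(4*a^2/r - 4*a + r) - r*Real.log (1+((b/a)*(2*a-r))^2)
    + (r - r/(1+((b/a)*(2*a-r))^2))

noncomputable def tentG (a b m : ℝ) (r : ℝ) : ℝ :=
  if r ≤ a then tentG1 a b m r else tentG2 a b m r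

noncomputable def tentF1 (a b m : ℝ) (r : ℝ) : ℝ :=
  (b/a)^2*r^2/2 + m^2*(b/a)^2*r^2/2
    - (1+((b/a)*r)^2)*(Real.log (1+((b/a)*r)^2)-1)/(2*(b/a)^2)
    + (r^2/2 - Real.log (1+((b/a)*r)^2)/(2*(b/a)^2))

noncomputable def tentF2 (a b m : ℝ) (r : ℝ) : ℝ :=
  (b/a)^2*r^2/2 + m^2*(b/a)^2*(4*a^2*Real.log r - 4*a*r + r^2/2)
  - ( -(2*a)*((2*a-r)*Real.log (1+((b/a)*(2*a-r))^2) - 2*(2*a-r)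
        + (2/(b/a))*Real.arctan ((b/a)*(2*a-r)))
      + (1+((b/a)*(2*a-r))^2)*(Real.log (1+((b/a)*(2*a-r))^2)-1)/(2*(b/a)^2) )
  + (r^2/2 - ( -(2*a/(b/a))*Real.arctan ((b/a)*(2*a-r))
      + Real.log (1+((b/a)*(2*a-r))^2)/(2*(b/a)^2) ))

lemma contG1 (a b m : ℝ) : Continuous (tentG1 a b m) := by
  unfold tentG1
  fun_prop (disch := (intro x; positivity))

lemma contG2 (a b m : ℝ) (ha : 0 < a) : ContinuousOn (tentG2 a b m) (Icc a (2*a)) := by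
  unfold tentG2
  fun_prop (disch := (intro x (hx : x ∈ Icc a (2*a)); first | positivity | exact (lt_of_lt_of_le ha hx.1).ne'))

lemma hd_lin (p q x : ℝ) : HasDerivAt (fun r => p + q*r) q x := by
  exact (((hasDerivAt_id' x).const_mul q).const_add p).congr_deriv (mul_one q)

lemma hd_u (c p q x : ℝ) : HasDerivAt (fun r => 1 + (c*(p+q*r))^2) (2*c^2*q*(p+q*x)) x := by
  have h := (hasDerivAt_const x (1:ℝ)).add (((hd_lin p q x).const_mul c).pow 2)
  refine h.congr_deriv ?_; ring

lemma hd_logu (c p q x : ℝ) :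
    HasDerivAt (fun r => Real.log (1+(c*(p+q*r))^2)) (2*c^2*q*(p+q*x)/(1+(c*(p+q*x))^2)) x := by
  have hpos : (0:ℝ) < 1+(c*(p+q*x))^2 := by positivity
  have h := (Real.hasDerivAt_log hpos.ne').comp x (hd_u c p q x)
  refine h.congr_deriv ?_
  field_simp

lemma hd_F1 (a b m : ℝ) (ha : 0 < a) (hb : 0 < b) (x : ℝ) :
    HasDerivAt (tentF1 a b m) (tentG1 a b m x) x := by
  have hc : b/a ≠ 0 := by positivity
  have hu : (0:ℝ) < 1+((b/a)*x)^2 := by positivity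
  have h0 : ∀ y : ℝ, (b/a)*y = (b/a)*(0 + 1*y) := by intro y; ring
  have hu' : HasDerivAt (fun r => 1 + ((b/a)*r)^2) (2*(b/a)^2*1*(0+1*x)) x := by
    simpa [h0] using hd_u (b/a) 0 1 x
  have hlog : HasDerivAt (fun r => Real.log (1+((b/a)*r)^2))
      (2*(b/a)^2*1*(0+1*x)/(1+((b/a)*(0+1*x))^2)) x := by
    simpa [h0] using hd_logu (b/a) 0 1 x
  have hsq : HasDerivAt (fun r : ℝ => r^2) (2*x) x := by
    simpa using hasDerivAt_pow 2 x
  have h1 : HasDerivAt (fun r => (b/a)^2*r^2/2) ((b/a)^2*(2*x)/2) x :=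
    (hsq.const_mul ((b/a)^2)).div_const 2
  have h2 : HasDerivAt (fun r => m^2*(b/a)^2*r^2/2) (m^2*(b/a)^2*(2*x)/2) x :=
    (hsq.const_mul (m^2*(b/a)^2)).div_const 2
  have h3 : HasDerivAt (fun r => (1+((b/a)*r)^2)*(Real.log (1+((b/a)*r)^2)-1)/(2*(b/a)^2))
      ((2*(b/a)^2*1*(0+1*x)*(Real.log (1+((b/a)*x)^2)-1)
        + (1+((b/a)*x)^2)*(2*(b/a)^2*1*(0+1*x)/(1+((b/a)*(0+1*x))^2)))/(2*(b/a)^2)) x :=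
    (hu'.mul (hlog.sub_const 1)).div_const _
  have h4 : HasDerivAt (fun r => r^2/2 - Real.log (1+((b/a)*r)^2)/(2*(b/a)^2))
      (2*x/2 - (2*(b/a)^2*1*(0+1*x)/(1+((b/a)*(0+1*x))^2))/(2*(b/a)^2)) x :=
    (hsq.div_const 2).sub (hlog.div_const _)
  have h := ((h1.add h2).sub h3).add h4
  refine h.congr_deriv ?_
  simp only [tentG1]
  have : (1:ℝ)+((b/a)*(0+1*x))^2 = 1+((b/a)*x)^2 := by ring
  rw [this]
  field_simp
  ring

lemma hd_lin' (t x : ℝ) : HasDerivAt (fun r : ℝ => t - r) (-1) x := by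
  exact ((hasDerivAt_const x t).sub (hasDerivAt_id' x)).congr_deriv (zero_sub 1)

lemma hd_u' (c t x : ℝ) : HasDerivAt (fun r => 1 + (c*(t-r))^2) (-(2*c^2*(t-x))) x := by
  have h := (hasDerivAt_const x (1:ℝ)).add (((hd_lin' t x).const_mul c).pow 2)
  refine h.congr_deriv ?_; ring

lemma hd_logu' (c t x : ℝ) :
    HasDerivAt (fun r => Real.log (1+(c*(t-r))^2)) (-(2*c^2*(t-x))/(1+(c*(t-x))^2)) x := by
  have hpos : (0:ℝ) < 1+(c*(t-x))^2 := by positivity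
  have h := (Real.hasDerivAt_log hpos.ne').comp x (hd_u' c t x)
  refine h.congr_deriv ?_
  field_simp

lemma hd_arctanu' (c t x : ℝ) :
    HasDerivAt (fun r => Real.arctan (c*(t-r))) (-(c/(1+(c*(t-x))^2))) x := by
  have h := (Real.hasDerivAt_arctan (c*(t-x))).comp x ((hd_lin' t x).const_mul c)
  refine h.congr_deriv ?_
  field_simp

lemma hd_F2 (a b m : ℝ) (ha : 0 < a) (hb : 0 < b) (x : ℝ) (hx : 0 < x) :
    HasDerivAt (tentF2 a b m) (tentG2 a b m x) x := by
  have hc : b/a ≠ 0 := by positivity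
  have hu : (0:ℝ) < 1+((b/a)*(2*a-x))^2 := by positivity
  have hsq : HasDerivAt (fun r : ℝ => r^2) (2*x) x := by
    simpa using hasDerivAt_pow 2 x
  have hu' := hd_u' (b/a) (2*a) x
  have hlog := hd_logu' (b/a) (2*a) x
  have hart := hd_arctanu' (b/a) (2*a) x
  have h1 : HasDerivAt (fun r => (b/a)^2*r^2/2) ((b/a)^2*(2*x)/2) x :=
    (hsq.const_mul ((b/a)^2)).div_const 2
  have h2 : HasDerivAt (fun r => m^2*(b/a)^2*(4*a^2*Real.log r - 4*a*r + r^2/2))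
      (m^2*(b/a)^2*((4*a^2*x⁻¹ - 4*a*1) + 2*x/2)) x := by
    exact ((((Real.hasDerivAt_log hx.ne').const_mul (4*a^2)).sub
      ((hasDerivAt_id x).const_mul (4*a))).add (hsq.div_const 2)).const_mul _
  have hP : HasDerivAt (fun r => (2*a-r)*Real.log (1+((b/a)*(2*a-r))^2))
      ((-1)*Real.log (1+((b/a)*(2*a-x))^2)
        + (2*a-x)*(-(2*(b/a)^2*(2*a-x))/(1+((b/a)*(2*a-x))^2))) x :=
    (hd_lin' (2*a) x).mul hlog
  have hQ : HasDerivAt (fun r : ℝ => 2*(2*a-r)) (2*(-1)) x := (hd_lin' (2*a) x).const_mul 2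
  have hR : HasDerivAt (fun r => (2/(b/a))*Real.arctan ((b/a)*(2*a-r)))
      ((2/(b/a))*(-((b/a)/(1+((b/a)*(2*a-x))^2)))) x := hart.const_mul _
  have h3 : HasDerivAt (fun r => -(2*a)*((2*a-r)*Real.log (1+((b/a)*(2*a-r))^2) - 2*(2*a-r)
        + (2/(b/a))*Real.arctan ((b/a)*(2*a-r)))
      + (1+((b/a)*(2*a-r))^2)*(Real.log (1+((b/a)*(2*a-r))^2)-1)/(2*(b/a)^2))
      (-(2*a)*(((-1)*Real.log (1+((b/a)*(2*a-x))^2)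
          + (2*a-x)*(-(2*(b/a)^2*(2*a-x))/(1+((b/a)*(2*a-x))^2))) - 2*(-1)
          + (2/(b/a))*(-((b/a)/(1+((b/a)*(2*a-x))^2))))
        + ((-(2*(b/a)^2*(2*a-x)))*(Real.log (1+((b/a)*(2*a-x))^2)-1)
          + (1+((b/a)*(2*a-x))^2)*(-(2*(b/a)^2*(2*a-x))/(1+((b/a)*(2*a-x))^2)))/(2*(b/a)^2)) x :=
    (((hP.sub hQ).add hR).const_mul (-(2*a))).add ((hu'.mul (hlog.sub_const 1)).div_const _)
  have h4 : HasDerivAt (fun r => r^2/2 - ( -(2*a/(b/a))*Real.arctan ((b/a)*(2*a-r))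
        + Real.log (1+((b/a)*(2*a-r))^2)/(2*(b/a)^2) ))
      (2*x/2 - ((-(2*a/(b/a)))*(-((b/a)/(1+((b/a)*(2*a-x))^2)))
        + (-(2*(b/a)^2*(2*a-x))/(1+((b/a)*(2*a-x))^2))/(2*(b/a)^2))) x :=
    (hsq.div_const 2).sub ((hart.const_mul _).add (hlog.div_const _))
  have h := ((h1.add h2).sub h3).add h4
  refine h.congr_deriv ?_
  simp only [tentG2]
  field_simp
  ring

lemma tentG1_eq_G2_at_a (a b m : ℝ) (ha : 0 < a) (hb : 0 < b) :
    tentG1 a b m a = tentG2 a b m a := by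
  unfold tentG1 tentG2
  have h2 : 2*a - a = a := by ring
  rw [h2]
  have hu : (0:ℝ) < 1+((b/a)*a)^2 := by positivity
  field_simp
  ring

theorem tent_J_value (a b : ℝ) (m : ℤ) (ha : 0 < a) (hb : 0 < b)
    (A0 : ℝ → ℝ)
    (hA0 : ∀ r : ℝ, A0 r = if r ≤ a then (b / a) * r else (b / a) * (2 * a - r)) :
    (1 / 2) * (∫ r in Ioo (0 : ℝ) (2 * a),
        (r * (deriv A0 r) ^ 2 + ((m : ℝ) ^ 2 / r) * (A0 r) ^ 2
          - r * Real.log (1 + (A0 r) ^ 2) + r * (A0 r) ^ 2 / (1 + (A0 r) ^ 2)))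
      = ((2 * a) ^ 2 / 4) * (3 - (3 / b) * Real.arctan b - Real.log (1 + b ^ 2)
          + (4 * b ^ 2 / (2 * a) ^ 2) * (1 + (m : ℝ) ^ 2 * (2 * Real.log 2 - 1))) := by
  have h2a : (0:ℝ) < 2*a := by linarith
  have haa : a ≤ 2*a := by linarith
  have hc : b/a ≠ 0 := by positivity
  -- Step 1: a.e. congruence of the integrand with tentG
  have hae : (fun r => r * (deriv A0 r) ^ 2 + ((m : ℝ) ^ 2 / r) * (A0 r) ^ 2
          - r * Real.log (1 + (A0 r) ^ 2) + r * (A0 r) ^ 2 / (1 + (A0 r) ^ 2))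
      =ᵐ[volume.restrict (Ioo (0:ℝ) (2*a))] tentG a b (m:ℝ) := by
    have hne : ∀ᵐ r ∂(volume.restrict (Ioo (0:ℝ) (2*a))), r ≠ a := by
      refine ae_restrict_of_ae ?_
      refine (ae_iff).mpr ?_
      have : {x : ℝ | ¬ x ≠ a} = {a} := by ext x; simp
      rw [this]
      exact Real.volume_singleton
    filter_upwards [hne, ae_restrict_mem measurableSet_Ioo] with r hra hr
    have hr0 : 0 < r := hr.1
    rcases lt_or_gt_of_ne hra with hlt | hgt
    · -- r < a
      have hder : deriv A0 r = b/a := by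
        have hev : A0 =ᶠ[nhds r] fun x => (b/a)*x := by
          filter_upwards [Iio_mem_nhds hlt] with x hx
          rw [hA0 x, if_pos hx.le]
        rw [hev.deriv_eq]
        simpa using ((hasDerivAt_id r).const_mul (b/a)).deriv
      rw [hder, hA0 r, if_pos hlt.le]
      unfold tentG
      rw [if_pos hlt.le]
      unfold tentG1
      have hu : (0:ℝ) < 1+((b/a)*r)^2 := by positivity
      field_simp
      ring
    · -- a < r
      have hder : deriv A0 r = -(b/a) := by
        have hev : A0 =ᶠ[nhds r] fun x => (b/a)*(2*a - x) := by
          filter_upwards [Ioi_mem_nhds hgt] with x hx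
          rw [hA0 x, if_neg (not_le.mpr hx)]
        rw [hev.deriv_eq]
        have : HasDerivAt (fun x => (b/a)*(2*a - x)) ((b/a)*(0-1)) r :=
          ((hasDerivAt_const r (2*a)).sub (hasDerivAt_id r)).const_mul (b/a)
        simpa using this.deriv
      rw [hder, hA0 r, if_neg (not_le.mpr hgt)]
      unfold tentG
      rw [if_neg (not_le.mpr hgt)]
      unfold tentG2
      have hu : (0:ℝ) < 1+((b/a)*(2*a-r))^2 := by positivity
      field_simp
      ring
  rw [integral_congr_ae hae]
  -- Step 2: pass to interval integral and split
  rw [← MeasureTheory.integral_Ioc_eq_integral_Ioo, ← intervalIntegral.integral_of_le h2a.le]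
  have heq1 : EqOn (tentG a b (m:ℝ)) (tentG1 a b (m:ℝ)) (uIcc 0 a) := by
    intro r hr
    rw [uIcc_of_le ha.le] at hr
    unfold tentG
    rw [if_pos hr.2]
  have heq2 : EqOn (tentG a b (m:ℝ)) (tentG2 a b (m:ℝ)) (uIcc a (2*a)) := by
    intro r hr
    rw [uIcc_of_le haa] at hr
    unfold tentG
    by_cases hra : r ≤ a
    · rw [show r = a from le_antisymm hra hr.1, if_pos le_rfl]
      exact tentG1_eq_G2_at_a a b (m:ℝ) ha hb
    · rw [if_neg hra]
  have hint1 : IntervalIntegrable (tentG a b (m:ℝ)) volume 0 a := by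
    apply ContinuousOn.intervalIntegrable
    exact ContinuousOn.congr (contG1 a b (m:ℝ)).continuousOn heq1
  have hint2 : IntervalIntegrable (tentG a b (m:ℝ)) volume a (2*a) := by
    apply ContinuousOn.intervalIntegrable
    refine ContinuousOn.congr ?_ heq2
    rw [uIcc_of_le haa]
    exact contG2 a b (m:ℝ) ha
  rw [← intervalIntegral.integral_add_adjacent_intervals hint1 hint2]
  -- Step 3: evaluate the two pieces
  have e1 : ∫ r in (0:ℝ)..a, tentG a b (m:ℝ) r = tentF1 a b (m:ℝ) a - tentF1 a b (m:ℝ) 0 := by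
    rw [intervalIntegral.integral_congr heq1]
    exact intervalIntegral.integral_eq_sub_of_hasDerivAt
      (fun x _ => hd_F1 a b (m:ℝ) ha hb x) ((contG1 a b (m:ℝ)).intervalIntegrable 0 a)
  have e2 : ∫ r in a..(2*a), tentG a b (m:ℝ) r = tentF2 a b (m:ℝ) (2*a) - tentF2 a b (m:ℝ) a := by
    rw [intervalIntegral.integral_congr heq2]
    refine intervalIntegral.integral_eq_sub_of_hasDerivAt (fun x hx => ?_) ?_
    · rw [uIcc_of_le haa] at hx
      exact hd_F2 a b (m:ℝ) ha hb x (lt_of_lt_of_le ha hx.1)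
    · refine ContinuousOn.intervalIntegrable ?_
      rw [uIcc_of_le haa]
      exact contG2 a b (m:ℝ) ha
  rw [e1, e2]
  -- Step 4: final algebra
  unfold tentF1 tentF2
  have hba : b/a*a = b := by field_simp
  have h22 : 2*a - 2*a = 0 := by ring
  have h21 : 2*a - a = a := by ring
  rw [h22, h21, hba]
  have hlog2a : Real.log (2*a) = Real.log 2 + Real.log a :=
    Real.log_mul two_ne_zero ha.ne'
  rw [hlog2a]
  simp only [mul_zero, ne_eq, OfNat.ofNat_ne_zero, not_false_eq_true, zero_pow, add_zero,
    Real.log_one, Real.arctan_zero, zero_pow, mul_zero, zero_div, sub_zero, zero_sub]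
  have hu : (0:ℝ) < 1 + b^2 := by positivity
  field_simp
  ring
end
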